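/- Let τ be an involutive diagram automorphism of an integer matrix A of corank 1 acting on Ker(A) by −1. Then every τ-orbit J ⊆ I on which the kernel coordinate function is nonzero has even cardinality, and for any functional d with α_{τ(j)}(d) = α_j(d) for all j ∈ I, one has δ(d) = Σ_j a_j α_j(d) = 0, where (a_j) spans Ker(A); consequently the functionals {α_j} together with δ cannot remain linearly independent on a framed realization, so no τ-compatible framed realization exists. -/

import Mathlib

lemma sum_eq_zero_of_tau {I : Type*} [Fintype I]
    (τ : Equiv.Perm I) (a c : I → ℤ)
    (hminus : ∀ j, a (τ j) = - a j) (hc : ∀ j, c (τ j) = c j) :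
    (∑ j, a j * c j) = 0 := by
  have h : (∑ j, a j * c j) = ∑ j, a (τ j) * c (τ j) :=
    (Fintype.sum_equiv τ _ _ (fun j => rfl)).symm
  have h2 : (∑ j, a j * c j) = - ∑ j, a j * c j := by
    calc (∑ j, a j * c j) = ∑ j, a (τ j) * c (τ j) := h
      _ = ∑ j, -(a j * c j) := by simp only [hminus, hc, neg_mul]
      _ = - ∑ j, a j * c j := Finset.sum_neg_distrib _
  linarith

/-- if an involutive diagram automorphism `τ` of a corank-one
integer matrix `A` acts on the kernel (spanned by `a`) by `−1`, then every
`τ`-orbit on which `a` is nonzero has even cardinality, any `τ`-invariant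
integer tuple `c = (α_j(d))_j` satisfies `δ(d) = ∑ a_j c_j = 0`, and
consequently there is no `τ`-compatible framed realization (no `τ`-invariant
scaling element keeps the simple roots linearly independent). -/
theorem no_tau_compatible_realization_of_minus_one
    {I : Type*} [Fintype I] [DecidableEq I]
    (A : Matrix I I ℤ) (τ : Equiv.Perm I)
    (hτ : ∀ i j, A (τ i) (τ j) = A i j)
    (hτ2 : ∀ i, τ (τ i) = i)
    (a : I → ℤ) (ha0 : a ≠ 0)
    (haker : A.mulVec a = 0)
    (hspan : ∀ x : I → ℚ, (A.map (Int.cast : ℤ → ℚ)).mulVec x = 0 →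
        ∃ t : ℚ, x = t • fun i => (a i : ℚ))
    (hminus : ∀ j, a (τ j) = - a j) :
    (∀ i, a i ≠ 0 → Even ({i, τ i} : Finset I).card) ∧
    (∀ c : I → ℤ, (∀ j, c (τ j) = c j) → (∑ j, a j * c j) = 0) ∧
    ¬ ∃ c : I → ℤ, (∀ j, c (τ j) = c j) ∧
        LinearIndependent ℚ
          (fun j : I => ((fun i => (A i j : ℚ), (c j : ℚ)) : (I → ℚ) × ℚ)) := by
  refine ⟨?_, fun c hc => sum_eq_zero_of_tau τ a c hminus hc, ?_⟩
  · intro i hi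
    have hne : τ i ≠ i := by
      intro h
      have := hminus i
      rw [h] at this
      omega
    rw [Finset.card_insert_of_notMem (by simpa using hne.symm), Finset.card_singleton]
    exact even_two
  · rintro ⟨c, hc, hli⟩
    have hsum := sum_eq_zero_of_tau τ a c hminus hc
    have := Fintype.linearIndependent_iff.mp hli (fun j => (a j : ℚ)) ?_
    · obtain ⟨i, hi⟩ := Function.ne_iff.mp ha0
      exact hi (by exact_mod_cast this i)
    · apply Prod.ext
      · funext i
        have hk : ∑ j, A i j * a j = 0 := congrFun haker i
        have hk' : (∑ j, (A i j : ℚ) * (a j : ℚ)) = 0 := by exact_mod_cast hk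
        simp only [Prod.fst_sum, Prod.smul_mk, Finset.sum_apply, Pi.smul_apply,
          smul_eq_mul, Prod.fst_zero, Pi.zero_apply]
        rw [← hk']
        exact Finset.sum_congr rfl fun j _ => mul_comm _ _
      · have hs' : (∑ j, (a j : ℚ) * (c j : ℚ)) = 0 := by exact_mod_cast hsum
        simp only [Prod.snd_sum, Prod.smul_mk, smul_eq_mul, Prod.snd_zero]
        exact hs'
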